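/- Let r : [0,∞) → ℝ be continuous with δ ≤ r(t) ≤ C (0 < δ ≤ C), and let ψ, t̃, T̃ be as above. Then the rescaled quantity r̃(t̃) := r(t) ψ(t)^{−1} satisfies r̃(t̃) · (T̃ − t̃) ≤ C n/(2δ) for all t̃ < T̃. -/

import Mathlib

open MeasureTheory

lemma exp_decay_integral (k t : ℝ) (hk : 0 < k) :
    ∫ x in Set.Ioi t, Real.exp (-(k * x)) = Real.exp (-(k * t)) / k := by
  have h := MeasureTheory.integral_comp_mul_left_Ioi (fun x => Real.exp (-x)) t hk
  simp only [smul_eq_mul] at h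
  rw [show (fun x => Real.exp (-(k * x))) = (fun x => Real.exp (-(k*x))) from rfl]
  calc ∫ x in Set.Ioi t, Real.exp (-(k * x))
      = k⁻¹ * ∫ x in Set.Ioi (k * t), Real.exp (-x) := h
    _ = Real.exp (-(k * t)) / k := by rw [integral_exp_neg_Ioi]; ring

theorem stmt_4 (n : ℕ) (hn : 1 ≤ n) (δ C : ℝ) (hδ : 0 < δ) (hδC : δ ≤ C)
    (r : ℝ → ℝ) (hr : Continuous r)
    (hbd : ∀ t, 0 ≤ t → δ ≤ r t ∧ r t ≤ C)
    (ψ : ℝ → ℝ)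
    (hψ : ∀ t, ψ t = Real.exp (-(∫ s in (0:ℝ)..t, (2 / (n : ℝ)) * r s))) :
    ∀ t, 0 ≤ t →
      r t * (ψ t)⁻¹ * ((∫ s in Set.Ioi (0 : ℝ), ψ s) - ∫ s in (0:ℝ)..t, ψ s) ≤
        C * (n : ℝ) / (2 * δ) := by
  have hnpos : (0:ℝ) < (n:ℝ) := by exact_mod_cast hn
  set k : ℝ := 2 * δ / n with hkdef
  have hk : 0 < k := by positivity
  set F : ℝ → ℝ := fun t => ∫ s in (0:ℝ)..t, (2 / (n : ℝ)) * r s with hF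
  have hFcont : Continuous F := by
    have : ∀ a b : ℝ, IntervalIntegrable (fun s => (2 / (n : ℝ)) * r s) volume a b :=
      fun a b => ((continuous_const.mul hr).intervalIntegrable a b)
    exact intervalIntegral.continuous_primitive this 0
  have hψc : Continuous ψ := by
    have : ψ = fun t => Real.exp (-(F t)) := funext fun t => hψ t
    rw [this]; exact (hFcont.neg).rexp
  have hψpos : ∀ t, 0 < ψ t := fun t => by rw [hψ]; exact Real.exp_pos _
  -- key growth estimate
  have hFdiff : ∀ t u : ℝ, 0 ≤ t → t ≤ u → k * (u - t) ≤ F u - F t := by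
    intro t u ht htu
    have hint : ∀ a b : ℝ, IntervalIntegrable (fun s => (2 / (n : ℝ)) * r s) volume a b :=
      fun a b => ((continuous_const.mul hr).intervalIntegrable a b)
    have h1 : F u - F t = ∫ s in t..u, (2 / (n : ℝ)) * r s :=
      intervalIntegral.integral_interval_sub_left (hint 0 u) (hint 0 t)
    have h2 : (∫ s in t..u, (2 * δ / (n : ℝ))) ≤ ∫ s in t..u, (2 / (n : ℝ)) * r s := by
      apply intervalIntegral.integral_mono_on htu (intervalIntegrable_const) (hint t u)
      intro x hx
      have hx0 : 0 ≤ x := le_trans ht hx.1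
      have := (hbd x hx0).1
      rw [mul_comm 2 δ, mul_div_assoc, mul_comm δ (2/(n:ℝ))]
      exact mul_le_mul_of_nonneg_left this (by positivity)
    rw [h1]
    calc k * (u - t) = (u - t) * (2 * δ / n) := by ring
      _ = ∫ s in t..u, (2 * δ / (n : ℝ)) := by rw [intervalIntegral.integral_const]; simp
      _ ≤ _ := h2
  -- pointwise bound: for s ≥ t ≥ 0, ψ s ≤ ψ t * exp(k*t) * exp(-(k*s))
  have hptw : ∀ t s : ℝ, 0 ≤ t → t ≤ s → ψ s ≤ ψ t * Real.exp (k * t) * Real.exp (-(k * s)) := by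
    intro t s ht hts
    rw [hψ s, hψ t, ← Real.exp_add, ← Real.exp_add]
    apply Real.exp_le_exp.mpr
    have := hFdiff t s ht hts
    change -(F s) ≤ -(F t) + k * t + -(k * s)
    nlinarith
  -- integrability
  have hexpint : ∀ a : ℝ, IntegrableOn (fun s => Real.exp (-(k * s))) (Set.Ioi a) := by
    intro a
    simpa [neg_mul] using exp_neg_integrableOn_Ioi a hk
  have hψint : ∀ t : ℝ, 0 ≤ t → IntegrableOn ψ (Set.Ioi t) := by
    intro t ht
    apply Integrable.mono' ((hexpint t).const_mul (ψ t * Real.exp (k * t)))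
      (hψc.aestronglyMeasurable.restrict)
    filter_upwards [ae_restrict_mem measurableSet_Ioi] with s hs
    rw [Real.norm_eq_abs, abs_of_pos (hψpos s)]
    exact hptw t s ht (le_of_lt hs)
  intro t ht
  -- split the integral
  have hsplit : (∫ s in Set.Ioi (0:ℝ), ψ s) - (∫ s in (0:ℝ)..t, ψ s)
      = ∫ s in Set.Ioi t, ψ s := by
    have hu : Set.Ioc 0 t ∪ Set.Ioi t = Set.Ioi (0:ℝ) := Set.Ioc_union_Ioi_eq_Ioi ht
    have hioc : IntegrableOn ψ (Set.Ioc 0 t) := hψc.integrableOn_Ioc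
    have := setIntegral_union (Set.Ioc_disjoint_Ioi le_rfl) measurableSet_Ioi hioc
      (hψint t ht) (f := ψ) (μ := volume)
    rw [hu] at this
    rw [intervalIntegral.integral_of_le ht, this]
    ring
  rw [hsplit]
  -- bound the tail integral
  have htail : (∫ s in Set.Ioi t, ψ s) ≤ ψ t / k := by
    calc (∫ s in Set.Ioi t, ψ s)
        ≤ ∫ s in Set.Ioi t, ψ t * Real.exp (k * t) * Real.exp (-(k * s)) := by
          apply setIntegral_mono_on (hψint t ht)
            (((hexpint t).const_mul (ψ t * Real.exp (k * t)))) measurableSet_Ioi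
          intro s hs
          exact hptw t s ht (le_of_lt hs)
      _ = ψ t * Real.exp (k * t) * ∫ s in Set.Ioi t, Real.exp (-(k * s)) := by
          rw [integral_const_mul]
      _ = ψ t / k := by
          rw [exp_decay_integral k t hk,
            show ψ t * Real.exp (k * t) * (Real.exp (-(k * t)) / k)
              = ψ t * Real.exp (k * t + -(k * t)) / k by rw [Real.exp_add]; ring]
          simp
  have hr0 : 0 ≤ r t * (ψ t)⁻¹ := by
    have := (hbd t ht).1
    have h1 : 0 ≤ r t := le_trans (le_of_lt hδ) this
    exact mul_nonneg h1 (inv_nonneg.mpr (hψpos t).le)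
  calc r t * (ψ t)⁻¹ * (∫ s in Set.Ioi t, ψ s)
      ≤ r t * (ψ t)⁻¹ * (ψ t / k) := mul_le_mul_of_nonneg_left htail hr0
    _ = r t / k := by
        have h2 : (ψ t)⁻¹ * (ψ t / k) = 1 / k := by
          field_simp
          exact div_self (hψpos t).ne'
        rw [mul_assoc, h2]; ring
    _ ≤ C / k := by gcongr; exact (hbd t ht).2
    _ = C * (n : ℝ) / (2 * δ) := by rw [hkdef]; field_simp
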